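/- (Key construction in the proof of Theorem 1.) Let T ≥ 1, and for t = 0,…,T−1 let A_t ∈ ℝ^{n×n}, Q_t ∈ ℝ^{n×n} symmetric positive definite, and Q_T ∈ ℝ^{n×n} symmetric positive definite. Suppose {K_{t|t+1}, P_{t|t+1}, P_t}_{t=0}^{T−1} are symmetric positive definite matrices satisfying P_T = Q_T⁻¹, K_{t|t+1} ⪰ P_{t|t+1}⁻¹, and P_t ⪯ (A_tᵀ K_{t|t+1} A_t + Q_t)⁻¹ for all t. Define recursively P̄_T := P_T, P̄_{t|t+1} := P̄_{t+1} + (P_{t|t+1} − P_{t+1}), K̄_{t|t+1} := P̄_{t|t+1}⁻¹, and P̄_t := (A_tᵀ K̄_{t|t+1} A_t + Q_t)⁻¹, for t = T−1 down to 0. Then for every t = 0,…,T−1: P̄_{t|t+1} ⪰ P_{t|t+1}, K̄_{t|t+1} ⪯ K_{t|t+1}, and P̄_t ⪰ P_t. Consequently, for any symmetric positive semidefinite weight matrices W̄_{−1},…,W̄_{T−2}, one has ∑_{t=0}^{T−1} tr(K̄_{t|t+1} W̄_{t−1}) ≤ ∑_{t=0}^{T−1} tr(K_{t|t+1} W̄_{t−1}).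 -/

import Mathlib

open Matrix Finset

section Aux

variable {n : ℕ}

lemma real_conjT (B : Matrix (Fin n) (Fin n) ℝ) : Bᴴ = Bᵀ := by
  ext i j; simp [Matrix.conjTranspose_apply]

lemma real_symm {M : Matrix (Fin n) (Fin n) ℝ} (h : M.IsHermitian) : Mᵀ = M := by
  rw [← real_conjT]; exact h.eq

lemma psd_conj {A : Matrix (Fin n) (Fin n) ℝ} (hA : A.PosSemidef)
    (B : Matrix (Fin n) (Fin n) ℝ) : (Bᵀ * A * B).PosSemidef := by
  simpa [real_conjT] using hA.conjTranspose_mul_mul_same B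

lemma psd_trace_nonneg {A : Matrix (Fin n) (Fin n) ℝ} (hA : A.PosSemidef) :
    0 ≤ A.trace := by
  rw [Matrix.trace]
  apply Finset.sum_nonneg
  intro i _
  exact hA.diag_nonneg

open scoped MatrixOrder in
lemma trace_mul_nonneg {A B : Matrix (Fin n) (Fin n) ℝ}
    (hA : A.PosSemidef) (hB : B.PosSemidef) : 0 ≤ (A * B).trace := by
  set S := CFC.sqrt A with hS
  have hSS : S * S = A := CFC.sqrt_mul_sqrt_self A hA.nonneg
  have hSpsd : S.PosSemidef := (CFC.sqrt_nonneg A).posSemidef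
  have h1 : (S * B * S).PosSemidef := by
    have := hB.mul_mul_conjTranspose_same S
    rwa [real_conjT, real_symm hSpsd.isHermitian] at this
  have h2 : (A * B).trace = (S * B * S).trace := by
    rw [← hSS, Matrix.mul_assoc, Matrix.trace_mul_comm, Matrix.mul_assoc]
  rw [h2]
  exact psd_trace_nonneg h1

lemma inv_sub_inv_psd {A B : Matrix (Fin n) (Fin n) ℝ}
    (hA : A.PosDef) (hB : B.PosDef) (hE : (B - A).PosSemidef) :
    (A⁻¹ - B⁻¹).PosSemidef := by
  have hAd : IsUnit A.det := hA.det_pos.ne'.isUnit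
  have hBd : IsUnit B.det := hB.det_pos.ne'.isUnit
  have h1 : (B⁻¹ * (B - A) * B⁻¹).PosSemidef := by
    have := hE.mul_mul_conjTranspose_same B⁻¹
    rwa [real_conjT, real_symm hB.isHermitian.inv] at this
  have h2 : ((B⁻¹ * (B - A)) * A⁻¹ * ((B - A) * B⁻¹)).PosSemidef := by
    have := hA.inv.posSemidef.mul_mul_conjTranspose_same (B⁻¹ * (B - A))
    rwa [real_conjT, Matrix.transpose_mul, real_symm hE.isHermitian,
      real_symm hB.isHermitian.inv] at this
  have hid : A⁻¹ - B⁻¹ =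
      B⁻¹ * (B - A) * B⁻¹ + (B⁻¹ * (B - A)) * A⁻¹ * ((B - A) * B⁻¹) := by
    have e1 : B⁻¹ * (B - A) * A⁻¹ = A⁻¹ - B⁻¹ := by
      rw [Matrix.mul_sub, Matrix.sub_mul, Matrix.nonsing_inv_mul _ hBd,
        Matrix.mul_assoc, Matrix.mul_nonsing_inv _ hAd, Matrix.mul_one, Matrix.one_mul]
    calc A⁻¹ - B⁻¹ = B⁻¹ * (B - A) * A⁻¹ := e1.symm
      _ = B⁻¹ * (B - A) * (A⁻¹ * ((A + (B - A)) * B⁻¹)) := by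
          rw [add_sub_cancel, Matrix.mul_nonsing_inv _ hBd, Matrix.mul_one]
      _ = B⁻¹ * (B - A) * B⁻¹ + (B⁻¹ * (B - A)) * A⁻¹ * ((B - A) * B⁻¹) := by
          rw [Matrix.add_mul, Matrix.mul_add, ← Matrix.mul_assoc A⁻¹ A,
            Matrix.nonsing_inv_mul _ hAd, Matrix.one_mul, Matrix.mul_add,
            Matrix.mul_assoc (B⁻¹ * (B - A)) A⁻¹]
  rw [hid]
  exact h1.add h2

end Aux

/-- key construction in the proof of Theorem 1.  Given a feasible tuple
`{Kmid t, Pmid t, P t}` of symmetric positive definite matrices of the relaxed problem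
(`P T = (Q T)⁻¹`, `Kmid t ⪰ (Pmid t)⁻¹`, `P t ⪯ (A_tᵀ Kmid t A_t + Q_t)⁻¹`), the
recursively constructed tuple `{K̄mid, P̄mid, P̄}` satisfies `P̄mid t ⪰ Pmid t`,
`K̄mid t ⪯ Kmid t`, `P̄ t ⪰ P t` for all `t < T`, and consequently the relaxed cost does
not increase:  `∑_t tr(K̄mid t W̄_{t−1}) ≤ ∑_t tr(Kmid t W̄_{t−1})`.
Here `W t` denotes `W̄_{t−1}`. -/
theorem theorem1_construction {n : ℕ} (T : ℕ) (hT : 1 ≤ T)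
    (A Q : ℕ → Matrix (Fin n) (Fin n) ℝ)
    (hQ : ∀ t ≤ T, (Q t).PosDef)
    (Kmid Pmid P : ℕ → Matrix (Fin n) (Fin n) ℝ)
    (hKmidPD : ∀ t < T, (Kmid t).PosDef)
    (hPmidPD : ∀ t < T, (Pmid t).PosDef)
    (hPPD : ∀ t < T, (P t).PosDef)
    (hPT : P T = (Q T)⁻¹)
    (hKge : ∀ t < T, (Kmid t - (Pmid t)⁻¹).PosSemidef)
    (hPle : ∀ t < T, (((A t)ᵀ * Kmid t * A t + Q t)⁻¹ - P t).PosSemidef)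
    -- the recursively constructed (barred) tuple
    (Kbar Pmidbar Pbar : ℕ → Matrix (Fin n) (Fin n) ℝ)
    (hPbarT : Pbar T = P T)
    (hPmidbar : ∀ t < T, Pmidbar t = Pbar (t + 1) + (Pmid t - P (t + 1)))
    (hKbar : ∀ t < T, Kbar t = (Pmidbar t)⁻¹)
    (hPbar : ∀ t < T, Pbar t = ((A t)ᵀ * Kbar t * A t + Q t)⁻¹) :
    (∀ t < T,
        (Pmidbar t - Pmid t).PosSemidef ∧
        (Kmid t - Kbar t).PosSemidef ∧
        (Pbar t - P t).PosSemidef) ∧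
      ∀ W : ℕ → Matrix (Fin n) (Fin n) ℝ, (∀ t < T, (W t).PosSemidef) →
        ∑ t ∈ range T, (Kbar t * W t).trace ≤
          ∑ t ∈ range T, (Kmid t * W t).trace := by
  -- the one-step construction
  have step : ∀ t < T, (Pbar (t + 1) - P (t + 1)).PosSemidef →
      (Pmidbar t - Pmid t).PosSemidef ∧ (Kmid t - Kbar t).PosSemidef ∧
      (Pbar t).PosDef ∧ (Pbar t - P t).PosSemidef := by
    intro t ht hdiff
    have hPmid := hPmidPD t ht
    have hmidsub : Pmidbar t - Pmid t = Pbar (t + 1) - P (t + 1) := by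
      rw [hPmidbar t ht]; abel
    have hmid_psd : (Pmidbar t - Pmid t).PosSemidef := hmidsub ▸ hdiff
    have hPmidbarPD : (Pmidbar t).PosDef := by
      have : Pmidbar t = Pmid t + (Pmidbar t - Pmid t) := by abel
      rw [this]
      exact hPmid.add_posSemidef hmid_psd
    -- Kmid t - Kbar t ⪰ 0
    have hKinv : ((Pmid t)⁻¹ - (Pmidbar t)⁻¹).PosSemidef :=
      inv_sub_inv_psd hPmid hPmidbarPD hmid_psd
    have hKsub : (Kmid t - Kbar t).PosSemidef := by
      have : Kmid t - Kbar t =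
          (Kmid t - (Pmid t)⁻¹) + ((Pmid t)⁻¹ - (Pmidbar t)⁻¹) := by
        rw [hKbar t ht]; abel
      rw [this]
      exact (hKge t ht).add hKinv
    -- the two "S" matrices
    have hKbarPD : (Kbar t).PosDef := by rw [hKbar t ht]; exact hPmidbarPD.inv
    have hS : ((A t)ᵀ * Kbar t * A t + Q t).PosDef :=
      Matrix.PosDef.posSemidef_add (psd_conj hKbarPD.posSemidef (A t)) (hQ t ht.le)
    have hSm : ((A t)ᵀ * Kmid t * A t + Q t).PosDef :=
      Matrix.PosDef.posSemidef_add (psd_conj (hKmidPD t ht).posSemidef (A t)) (hQ t ht.le)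
    have hSdiff : (((A t)ᵀ * Kmid t * A t + Q t) -
        ((A t)ᵀ * Kbar t * A t + Q t)).PosSemidef := by
      have : ((A t)ᵀ * Kmid t * A t + Q t) - ((A t)ᵀ * Kbar t * A t + Q t) =
          (A t)ᵀ * (Kmid t - Kbar t) * A t := by
        rw [Matrix.mul_sub, Matrix.sub_mul]; abel
      rw [this]
      exact psd_conj hKsub (A t)
    have hPbarPD : (Pbar t).PosDef := by rw [hPbar t ht]; exact hS.inv
    have hPsub : (Pbar t - P t).PosSemidef := by
      have h1 : (((A t)ᵀ * Kbar t * A t + Q t)⁻¹ -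
          ((A t)ᵀ * Kmid t * A t + Q t)⁻¹).PosSemidef :=
        inv_sub_inv_psd hS hSm hSdiff
      have : Pbar t - P t =
          (((A t)ᵀ * Kbar t * A t + Q t)⁻¹ - ((A t)ᵀ * Kmid t * A t + Q t)⁻¹) +
          (((A t)ᵀ * Kmid t * A t + Q t)⁻¹ - P t) := by
        rw [hPbar t ht]; abel
      rw [this]
      exact h1.add (hPle t ht)
    exact ⟨hmid_psd, hKsub, hPbarPD, hPsub⟩
  -- downward induction invariant
  have key : ∀ k, k ≤ T → (Pbar (T - k) - P (T - k)).PosSemidef := by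
    intro k
    induction k with
    | zero => intro _; simp only [Nat.sub_zero, hPbarT, sub_self]; exact .zero
    | succ k ih =>
      intro hk1
      have ht : T - (k + 1) < T := by omega
      have ht1 : T - (k + 1) + 1 = T - k := by omega
      have hprev : (Pbar (T - (k + 1) + 1) - P (T - (k + 1) + 1)).PosSemidef := by
        rw [ht1]; exact ih (by omega)
      exact (step (T - (k + 1)) ht hprev).2.2.2
  have main : ∀ t < T,
      (Pmidbar t - Pmid t).PosSemidef ∧ (Kmid t - Kbar t).PosSemidef ∧
      (Pbar t).PosDef ∧ (Pbar t - P t).PosSemidef := by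
    intro t ht
    have hk : T - (t + 1) ≤ T := Nat.sub_le _ _
    have hTt : T - (T - (t + 1)) = t + 1 := Nat.sub_sub_self ht
    have := key (T - (t + 1)) hk
    rw [hTt] at this
    exact step t ht this
  constructor
  · intro t ht
    obtain ⟨h1, h2, _, h4⟩ := main t ht
    exact ⟨h1, h2, h4⟩
  · intro W hW
    apply Finset.sum_le_sum
    intro t htm
    have ht := Finset.mem_range.mp htm
    have h := trace_mul_nonneg (main t ht).2.1 (hW t ht)
    have : (Kmid t * W t).trace - (Kbar t * W t).trace =
        ((Kmid t - Kbar t) * W t).trace := by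
      rw [Matrix.sub_mul, Matrix.trace_sub]
    linarith [this ▸ h]
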